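/- Let P be a product probability density on bitstrings of length n, and let z, z' be two distinct bitstrings with Hamming distance D = D_H(z, z') ≥ 1. Then P(z)^{1/D} + P(z')^{1/D} ≤ 1. -/
import Mathlib


/-- Auxiliary: if `0 ≤ p ≤ ∏ i in s, a i` with `a i ≥ 0`, `s.card = D ≥ 1`, then
`p ^ (1/D) ≤ ∑ i in s, (1/D) * a i`. -/
lemma aux_rpow_le_sum {ι : Type*} (s : Finset ι) (a : ι → ℝ) (D : ℕ) (hDcard : s.card = D)
    (hD : 1 ≤ D) (ha : ∀ i ∈ s, 0 ≤ a i) (p : ℝ) (hp0 : 0 ≤ p) (hps : p ≤ ∏ i ∈ s, a i) :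
    p ^ ((1 : ℝ) / (D : ℝ)) ≤ ∑ i ∈ s, ((1 : ℝ) / (D : ℝ)) * a i := by
  have hDpos : (0 : ℝ) < D := by exact_mod_cast hD
  have hw : ∀ i ∈ s, (0 : ℝ) ≤ 1 / (D : ℝ) := fun i _ => by positivity
  have hw' : ∑ i ∈ s, (1 : ℝ) / (D : ℝ) = 1 := by
    rw [Finset.sum_const, hDcard, nsmul_eq_mul]
    field_simp
  calc p ^ ((1 : ℝ) / (D : ℝ)) ≤ (∏ i ∈ s, a i) ^ ((1 : ℝ) / (D : ℝ)) := by
        apply Real.rpow_le_rpow hp0 hps (by positivity)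
    _ = ∏ i ∈ s, a i ^ ((1 : ℝ) / (D : ℝ)) := by
        rw [← Real.finset_prod_rpow s a ha]
    _ ≤ ∑ i ∈ s, ((1 : ℝ) / (D : ℝ)) * a i :=
        Real.geom_mean_le_arith_mean_weighted s _ a hw hw' ha

/-- Paper: Appendix Lemma 2.
Let `P` be a product probability density on bitstrings of length `n`
(with parameters `q i ∈ [0,1]`), and let `z, z'` be two distinct bitstrings with
Hamming distance `D = D_H(z, z') ≥ 1`. Then `P z ^ (1/D) + P z' ^ (1/D) ≤ 1`. -/
theorem rpow_hammingDist_add_rpow_hammingDist_le_one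
    (n : ℕ) (q : Fin n → ℝ) (hq : ∀ i, 0 ≤ q i ∧ q i ≤ 1)
    (P : (Fin n → Bool) → ℝ)
    (hP : ∀ x, P x = ∏ i, if x i then q i else 1 - q i)
    (z z' : Fin n → Bool) (hne : z ≠ z') (hD : 1 ≤ hammingDist z z') :
    P z ^ ((1 : ℝ) / (hammingDist z z' : ℝ))
      + P z' ^ ((1 : ℝ) / (hammingDist z z' : ℝ)) ≤ 1 := by
  classical
  set s : Finset (Fin n) := Finset.univ.filter (fun i => z i ≠ z' i) with hs
  have hcard : s.card = hammingDist z z' := rfl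
  set a : Fin n → ℝ := fun i => if z i then q i else 1 - q i with ha
  have ha01 : ∀ i, 0 ≤ a i ∧ a i ≤ 1 := by
    intro i
    simp only [ha]
    rcases hq i with ⟨h0, h1⟩
    split <;> constructor <;> linarith
  -- factor for z' on s is 1 - a i
  have ha' : ∀ i ∈ s, (if z' i then q i else 1 - q i) = 1 - a i := by
    intro i hi
    simp only [hs, Finset.mem_filter] at hi
    simp only [ha]
    cases hzi : z i <;> cases hzi' : z' i <;> simp_all <;> ring
  -- bounds on P z, P z'
  have hfac01 : ∀ (x : Fin n → Bool) (i : Fin n),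
      0 ≤ (if x i then q i else 1 - q i) ∧ (if x i then q i else 1 - q i) ≤ 1 := by
    intro x i
    rcases hq i with ⟨h0, h1⟩
    split <;> constructor <;> linarith
  have hPbound : ∀ x : Fin n → Bool, 0 ≤ P x ∧ P x ≤ ∏ i ∈ s, (if x i then q i else 1 - q i) := by
    intro x
    rw [hP]
    constructor
    · exact Finset.prod_nonneg fun i _ => (hfac01 x i).1
    · have := Finset.prod_mul_prod_compl s (fun i => if x i then q i else 1 - q i)
      rw [← this]
      have h1 : ∏ i ∈ sᶜ, (if x i then q i else 1 - q i) ≤ 1 :=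
        Finset.prod_le_one (fun i _ => (hfac01 x i).1) (fun i _ => (hfac01 x i).2)
      have h2 : 0 ≤ ∏ i ∈ s, (if x i then q i else 1 - q i) :=
        Finset.prod_nonneg fun i _ => (hfac01 x i).1
      nlinarith [Finset.prod_nonneg (fun i (_ : i ∈ sᶜ) => (hfac01 x i).1)]
  have h1 := aux_rpow_le_sum s a (hammingDist z z') hcard hD
      (fun i _ => (ha01 i).1) (P z) (hPbound z).1 (hPbound z).2
  have h2 := aux_rpow_le_sum s (fun i => 1 - a i) (hammingDist z z') hcard hD
      (fun i _ => sub_nonneg.mpr (ha01 i).2) (P z')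
      (hPbound z').1 (le_trans (hPbound z').2 (le_of_eq (Finset.prod_congr rfl ha')))
  have hsum : (∑ i ∈ s, ((1 : ℝ) / (hammingDist z z' : ℝ)) * a i)
      + (∑ i ∈ s, ((1 : ℝ) / (hammingDist z z' : ℝ)) * (1 - a i)) = 1 := by
    rw [← Finset.sum_add_distrib]
    have : ∀ i ∈ s, ((1 : ℝ) / (hammingDist z z' : ℝ)) * a i
        + ((1 : ℝ) / (hammingDist z z' : ℝ)) * (1 - a i) = 1 / (hammingDist z z' : ℝ) := by
      intro i _; ring
    rw [Finset.sum_congr rfl this, Finset.sum_const, hcard, nsmul_eq_mul]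
    have : (0 : ℝ) < (hammingDist z z' : ℝ) := by exact_mod_cast hD
    field_simp
  linarith
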